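/- Let Q^p, Q^s be independent Poisson with means γ^p C and γ^s C (0 < γ^s < γ^p < 1, γ^p+γ^s < 1). Then the diversity gain d = lim_C -(1/C)log P(Q^p+Q^s > C, Q^s>0) satisfies γ^p + γ^s - 1 - log(γ^p+γ^s) ≤ d ≤ γ^p - 1 - log γ^p (whenever the limit exists; otherwise liminf and limsup satisfy the respective bounds). -/

import Mathlib

open Filter Real
open Topology

noncomputable def poisP (l : ℝ) (k : ℕ) : ℝ := Real.exp (-l) * l ^ k / (Nat.factorial k)

noncomputable def secOutage (lp ls : ℝ) (C : ℝ) : ℝ :=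
  ∑' j : ℕ, ∑' k : ℕ, if C < (j : ℝ) + (k : ℝ) ∧ 0 < k then poisP lp j * poisP ls k else 0



lemma poisP_nonneg {l : ℝ} (hl : 0 ≤ l) (k : ℕ) : 0 ≤ poisP l k := by
  unfold poisP; positivity

lemma hasSum_pow_div_fact (x : ℝ) : HasSum (fun n : ℕ => x ^ n / n.factorial) (Real.exp x) := by
  have := NormedSpace.expSeries_div_hasSum_exp x
  rwa [← Real.exp_eq_exp_ℝ] at this

lemma hasSum_poisP_exp (l t : ℝ) :
    HasSum (fun k : ℕ => poisP l k * Real.exp (t * k))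
      (Real.exp (-l) * Real.exp (l * Real.exp t)) := by
  have h := (hasSum_pow_div_fact (l * Real.exp t)).mul_left (Real.exp (-l))
  refine h.congr_fun fun k => ?_
  have he : Real.exp (t * k) = (Real.exp t) ^ k := by
    rw [mul_comm, Real.exp_nat_mul]
  unfold poisP
  rw [he, mul_pow]
  ring

lemma hasSum_poisP (l : ℝ) : HasSum (poisP l) 1 := by
  have := hasSum_poisP_exp l 0
  simpa [Real.exp_zero, ← Real.exp_add] using this

lemma secOutage_bounds' (lp ls : ℝ) (hlp : 0 ≤ lp) (hls : 0 ≤ ls) (C : ℕ) {t : ℝ} (ht : 0 < t) :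
    poisP lp C * (1 - Real.exp (-ls)) ≤ secOutage lp ls C ∧
      secOutage lp ls C ≤ Real.exp ((lp + ls) * (Real.exp t - 1) - t * C) := by
  set f : ℕ → ℕ → ℝ := fun j k =>
    if (C : ℝ) < (j : ℝ) + (k : ℝ) ∧ 0 < k then poisP lp j * poisP ls k else 0 with hf
  have hnn : ∀ j k, 0 ≤ f j k := by
    intro j k
    rw [hf]; dsimp only
    split
    · exact mul_nonneg (poisP_nonneg hlp j) (poisP_nonneg hls k)
    · exact le_rfl
  -- plain comparison for summability
  have hle0 : ∀ j k, f j k ≤ poisP lp j * poisP ls k := by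
    intro j k
    rw [hf]; dsimp only
    split
    · exact le_rfl
    · exact mul_nonneg (poisP_nonneg hlp j) (poisP_nonneg hls k)
  have hinnersum : ∀ j, Summable (f j) := fun j =>
    Summable.of_nonneg_of_le (hnn j) (hle0 j) (((hasSum_poisP ls).mul_left (poisP lp j)).summable)
  set F : ℕ → ℝ := fun j => ∑' k, f j k with hFdef
  have hFnn : ∀ j, 0 ≤ F j := fun j => tsum_nonneg (hnn j)
  have hFle0 : ∀ j, F j ≤ poisP lp j := by
    intro j
    have := Summable.tsum_le_tsum (hle0 j) (hinnersum j) (((hasSum_poisP ls).mul_left (poisP lp j)).summable)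
    calc F j ≤ ∑' k, poisP lp j * poisP ls k := this
      _ = poisP lp j * 1 := ((hasSum_poisP ls).mul_left (poisP lp j)).tsum_eq
      _ = poisP lp j := mul_one _
  have hFsum : Summable F := Summable.of_nonneg_of_le hFnn hFle0 (hasSum_poisP lp).summable
  have hSO : secOutage lp ls C = ∑' j, F j := rfl
  constructor
  · -- lower bound: take j = C
    have hfC : f C = fun k => poisP lp C * (if 0 < k then poisP ls k else 0) := by
      funext k
      rw [hf]; dsimp only
      by_cases hk : 0 < k
      · have hk' : (0 : ℝ) < (k : ℝ) := by exact_mod_cast hk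
        rw [if_pos ⟨by linarith, hk⟩, if_pos hk]
      · rw [if_neg (fun h => hk h.2), if_neg hk, mul_zero]
    have hind : HasSum (fun k : ℕ => if 0 < k then poisP ls k else 0) (1 - Real.exp (-ls)) := by
      have h2 : HasSum (fun k : ℕ => if k = 0 then poisP ls 0 else 0) (poisP ls 0) :=
        hasSum_ite_eq 0 _
      have h3 := (hasSum_poisP ls).sub h2
      have h4 : (fun k : ℕ => poisP ls k - if k = 0 then poisP ls 0 else 0) =
          fun k : ℕ => if 0 < k then poisP ls k else 0 := by
        funext k
        by_cases hk : k = 0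
        · subst hk; simp
        · simp [hk, Nat.pos_of_ne_zero hk]
      rw [h4] at h3
      have h5 : poisP ls 0 = Real.exp (-ls) := by simp [poisP]
      rwa [h5] at h3
    have hFC : F C = poisP lp C * (1 - Real.exp (-ls)) := by
      rw [hFdef]; dsimp only
      rw [hfC]
      exact (hind.mul_left (poisP lp C)).tsum_eq
    rw [hSO, ← hFC]
    exact hFsum.le_tsum C fun j _ => hFnn j
  · -- Chernoff upper bound
    set Ms : ℝ := Real.exp (-ls) * Real.exp (ls * Real.exp t) with hMs
    set b : ℕ → ℕ → ℝ := fun j k =>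
      (poisP lp j * Real.exp (t * j)) * ((poisP ls k * Real.exp (t * k)) * Real.exp (-(t * C)))
      with hb
    have key : ∀ j k, f j k ≤ b j k := by
      intro j k
      rw [hf, hb]; dsimp only
      split
      · rename_i h
        have h1 : (1 : ℝ) ≤ Real.exp (t * j) * (Real.exp (t * k) * Real.exp (-(t * C))) := by
          rw [← Real.exp_add, ← Real.exp_add]
          apply Real.one_le_exp
          nlinarith [mul_pos ht (sub_pos.mpr h.1)]
        calc poisP lp j * poisP ls k = (poisP lp j * poisP ls k) * 1 := (mul_one _).symm
          _ ≤ (poisP lp j * poisP ls k) *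
              (Real.exp (t * j) * (Real.exp (t * k) * Real.exp (-(t * C)))) :=
            mul_le_mul_of_nonneg_left h1
              (mul_nonneg (poisP_nonneg hlp j) (poisP_nonneg hls k))
          _ = (poisP lp j * Real.exp (t * j)) *
              ((poisP ls k * Real.exp (t * k)) * Real.exp (-(t * C))) := by ring
      · have : 0 ≤ (poisP lp j * Real.exp (t * j)) *
            ((poisP ls k * Real.exp (t * k)) * Real.exp (-(t * C))) := by
          have := poisP_nonneg hlp j
          have := poisP_nonneg hls k
          positivity
        exact this
    have hbk : ∀ j, HasSum (b j)
        ((poisP lp j * Real.exp (t * j)) * (Ms * Real.exp (-(t * C)))) := by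
      intro j
      have h1 := ((hasSum_poisP_exp ls t).mul_right (Real.exp (-(t * C)))).mul_left
        (poisP lp j * Real.exp (t * j))
      rw [hMs, hb]
      exact h1
    have hFleb : ∀ j, F j ≤ (poisP lp j * Real.exp (t * j)) * (Ms * Real.exp (-(t * C))) := by
      intro j
      calc F j ≤ ∑' k, b j k := Summable.tsum_le_tsum (key j) (hinnersum j) (hbk j).summable
        _ = _ := (hbk j).tsum_eq
    have hV : HasSum (fun j => (poisP lp j * Real.exp (t * j)) * (Ms * Real.exp (-(t * C))))
        ((Real.exp (-lp) * Real.exp (lp * Real.exp t)) * (Ms * Real.exp (-(t * C)))) :=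
      (hasSum_poisP_exp lp t).mul_right _
    have hfinal : ∑' j, F j ≤
        (Real.exp (-lp) * Real.exp (lp * Real.exp t)) * (Ms * Real.exp (-(t * C))) := by
      calc ∑' j, F j ≤ ∑' j, (poisP lp j * Real.exp (t * j)) * (Ms * Real.exp (-(t * C))) :=
            Summable.tsum_le_tsum hFleb hFsum hV.summable
        _ = _ := hV.tsum_eq
    rw [hSO]
    refine hfinal.trans_eq ?_
    rw [hMs, ← Real.exp_add, ← Real.exp_add, ← Real.exp_add, ← Real.exp_add]
    congr 1
    ring

/-- Secondary diversity gain bounds in the linear scaling regime: with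
`Q^p, Q^s` independent Poisson of means `γ^p C` and `γ^s C`, the normalized decay rate
of `P(Q^p+Q^s > C, Q^s>0)` satisfies
`γ^p + γ^s - 1 - log(γ^p+γ^s) ≤ liminf` and `limsup ≤ γ^p - 1 - log γ^p`. -/
theorem secondary_diversity_bounds (γp γs : ℝ)
    (h0 : 0 < γs) (h1 : γs < γp) (h2 : γp < 1) (h3 : γp + γs < 1) :
    γp + γs - 1 - Real.log (γp + γs) ≤
        Filter.liminf (fun C : ℕ =>
          -(1 / (C : ℝ)) * Real.log (secOutage (γp * C) (γs * C) C)) atTop ∧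
      Filter.limsup (fun C : ℕ =>
          -(1 / (C : ℝ)) * Real.log (secOutage (γp * C) (γs * C) C)) atTop ≤
        γp - 1 - Real.log γp := by
  have hγp0 : 0 < γp := h0.trans h1
  have hγ0 : 0 < γp + γs := by linarith
  have hlogγ : Real.log (γp + γs) < 0 := Real.log_neg hγ0 h3
  set t : ℝ := -Real.log (γp + γs) with htdef
  have ht : 0 < t := by rw [htdef]; linarith
  have het : Real.exp t = (γp + γs)⁻¹ := by rw [htdef, Real.exp_neg, Real.exp_log hγ0]
  set u : ℕ → ℝ := fun C : ℕ =>
    -(1 / (C : ℝ)) * Real.log (secOutage (γp * C) (γs * C) C) with hu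
  set g : ℕ → ℝ := fun C : ℕ =>
    (γp - Real.log γp - 1) + (1 / (C : ℝ)) * Real.log (Stirling.stirlingSeq C)
      + (1 / (2 * (C : ℝ))) * Real.log (2 * C)
      - (1 / (C : ℝ)) * Real.log (1 - Real.exp (-(γs * C))) with hg
  have hbound : ∀ C : ℕ, 1 ≤ C → (γp + γs - 1 - Real.log (γp + γs) ≤ u C ∧ u C ≤ g C) := by
    intro C hC
    have hC0 : (0 : ℝ) < C := by exact_mod_cast hC
    have hlp : 0 < γp * C := by positivity
    have hls : 0 < γs * C := by positivity
    obtain ⟨hlow, hhigh⟩ := secOutage_bounds' (γp * C) (γs * C) hlp.le hls.le C ht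
    have hexpls : Real.exp (-(γs * C)) < 1 := by
      rw [Real.exp_lt_one_iff]; linarith
    have hLBpos : 0 < poisP (γp * C) C * (1 - Real.exp (-(γs * C))) := by
      apply mul_pos
      · unfold poisP; positivity
      · linarith
    have hSpos : 0 < secOutage (γp * C) (γs * C) C := hLBpos.trans_le hlow
    constructor
    · -- Chernoff side
      have hlog : Real.log (secOutage (γp * C) (γs * C) C) ≤
          (1 - (γp + γs) + Real.log (γp + γs)) * C := by
        have := Real.log_le_log hSpos hhigh
        rw [Real.log_exp] at this
        refine this.trans_eq ?_
        rw [het, htdef]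
        field_simp
        ring
      have h2' : (1 / (C : ℝ)) * ((1 - (γp + γs) + Real.log (γp + γs)) * C)
          = 1 - (γp + γs) + Real.log (γp + γs) := by field_simp
      have h3' := mul_le_mul_of_nonneg_left hlog (by positivity : (0:ℝ) ≤ 1 / (C : ℝ))
      rw [h2'] at h3'
      have hne : u C = -((1 / (C : ℝ)) * Real.log (secOutage (γp * C) (γs * C) C)) := by
        rw [hu]; ring
      rw [hne]
      linarith
    · -- Stirling side
      have hfacpos : (0 : ℝ) < (Nat.factorial C : ℝ) := by
        exact_mod_cast Nat.factorial_pos C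
      have hlogLB : Real.log (poisP (γp * C) C * (1 - Real.exp (-(γs * C))))
          ≤ Real.log (secOutage (γp * C) (γs * C) C) := Real.log_le_log hLBpos hlow
      have hpoispos : 0 < poisP (γp * C) C := by unfold poisP; positivity
      have hlogsplit : Real.log (poisP (γp * C) C * (1 - Real.exp (-(γs * C))))
          = Real.log (poisP (γp * C) C) + Real.log (1 - Real.exp (-(γs * C))) :=
        Real.log_mul hpoispos.ne' (by linarith)
      have hlogp : Real.log (poisP (γp * C) C)
          = -(γp * C) + C * Real.log (γp * C) - Real.log (Nat.factorial C : ℝ) := by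
        unfold poisP
        rw [Real.log_div (by positivity) hfacpos.ne',
          Real.log_mul (Real.exp_ne_zero _) (by positivity), Real.log_exp, Real.log_pow]
      have hst := Stirling.log_stirlingSeq_formula C
      have hlogdiv : Real.log ((C : ℝ) / Real.exp 1) = Real.log C - 1 := by
        rw [Real.log_div hC0.ne' (Real.exp_ne_zero 1), Real.log_exp]
      have hfact_eq : Real.log (Nat.factorial C : ℝ)
          = Real.log (Stirling.stirlingSeq C) + 1 / 2 * Real.log (2 * C)
            + C * (Real.log C - 1) := by
        rw [← hlogdiv]; linarith [hst]
      have hlogγpC : Real.log (γp * C) = Real.log γp + Real.log C :=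
        Real.log_mul hγp0.ne' hC0.ne'
      have hA : g C = -(1 / (C : ℝ)) *
          ((-(γp * C) + C * Real.log (γp * C) - Real.log (Nat.factorial C : ℝ))
            + Real.log (1 - Real.exp (-(γs * C)))) := by
        rw [hg]; dsimp only
        rw [hlogγpC, hfact_eq]
        field_simp
        ring
      have hmono : -(1 / (C : ℝ)) * Real.log (secOutage (γp * C) (γs * C) C)
          ≤ -(1 / (C : ℝ)) *
            ((-(γp * C) + C * Real.log (γp * C) - Real.log (Nat.factorial C : ℝ))
              + Real.log (1 - Real.exp (-(γs * C)))) := by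
        have hLB' : (-(γp * C) + C * Real.log (γp * C) - Real.log (Nat.factorial C : ℝ))
            + Real.log (1 - Real.exp (-(γs * C)))
            ≤ Real.log (secOutage (γp * C) (γs * C) C) := by
          rw [← hlogp]; rw [← hlogsplit]; exact hlogLB
        have h4 := mul_le_mul_of_nonneg_left hLB' (by positivity : (0:ℝ) ≤ 1 / (C : ℝ))
        nlinarith [h4]
      rw [hu, hA]
      exact hmono
  -- limit of g
  have hgtend : Tendsto g atTop (𝓝 (γp - 1 - Real.log γp)) := by
    have h1C : Tendsto (fun C : ℕ => 1 / (C : ℝ)) atTop (𝓝 0) :=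
      tendsto_one_div_atTop_nhds_zero_nat
    have hstl : Tendsto (fun C : ℕ => Real.log (Stirling.stirlingSeq C)) atTop
        (𝓝 (Real.log (Real.sqrt Real.pi))) :=
      ((Real.continuousAt_log (Real.sqrt_pos.mpr Real.pi_pos).ne').tendsto).comp
        Stirling.tendsto_stirlingSeq_sqrt_pi
    have hA : Tendsto (fun C : ℕ => (1 / (C : ℝ)) * Real.log (Stirling.stirlingSeq C)) atTop
        (𝓝 0) := by simpa using h1C.mul hstl
    have hB : Tendsto (fun C : ℕ => (1 / (2 * (C : ℝ))) * Real.log (2 * (C : ℝ))) atTop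
        (𝓝 0) := by
      have hlogdiv := Real.isLittleO_log_id_atTop.tendsto_div_nhds_zero
      have h2C : Tendsto (fun C : ℕ => 2 * (C : ℝ)) atTop atTop :=
        (tendsto_natCast_atTop_atTop).const_mul_atTop two_pos
      have h5 := hlogdiv.comp h2C
      refine h5.congr fun C => ?_
      simp only [Function.comp_apply, id]
      rw [one_div_mul_eq_div]
    have hCexp : Tendsto (fun C : ℕ => Real.exp (-(γs * C))) atTop (𝓝 0) := by
      have heq : (fun C : ℕ => Real.exp (-(γs * C))) = fun C : ℕ => (Real.exp (-γs)) ^ C := by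
        funext C
        rw [← Real.exp_nat_mul]
        ring_nf
      rw [heq]
      exact tendsto_pow_atTop_nhds_zero_of_lt_one (Real.exp_pos _).le
        (Real.exp_lt_one_iff.mpr (by linarith))
    have hC2 : Tendsto (fun C : ℕ => Real.log (1 - Real.exp (-(γs * C)))) atTop (𝓝 0) := by
      have h6 : Tendsto (fun C : ℕ => 1 - Real.exp (-(γs * C))) atTop (𝓝 1) := by
        simpa using (tendsto_const_nhds.sub hCexp)
      have h7 := ((Real.continuousAt_log one_ne_zero).tendsto).comp h6
      simpa [Function.comp_def] using h7
    have hD : Tendsto (fun C : ℕ => (1 / (C : ℝ)) * Real.log (1 - Real.exp (-(γs * C)))) atTop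
        (𝓝 0) := by simpa using h1C.mul hC2
    have hfin := ((tendsto_const_nhds (x := γp - Real.log γp - 1)).add hA).add hB |>.sub hD
    have hval : (γp - Real.log γp - 1 + 0) + 0 - 0 = γp - 1 - Real.log γp := by ring
    rw [hval] at hfin
    exact hfin
  have hev1 : ∀ᶠ C in atTop, γp + γs - 1 - Real.log (γp + γs) ≤ u C :=
    eventually_atTop.2 ⟨1, fun C hC => (hbound C hC).1⟩
  have hev2 : ∀ᶠ C in atTop, u C ≤ g C :=
    eventually_atTop.2 ⟨1, fun C hC => (hbound C hC).2⟩
  have hbdd_above : IsBoundedUnder (· ≤ ·) atTop u :=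
    (hgtend.isBoundedUnder_le).mono_le hev2
  have hcob_ge : IsCoboundedUnder (· ≥ ·) atTop u := hbdd_above.isCoboundedUnder_ge
  have hbdd_below : IsBoundedUnder (· ≥ ·) atTop u := isBoundedUnder_of_eventually_ge hev1
  have hcob_le : IsCoboundedUnder (· ≤ ·) atTop u := hbdd_below.isCoboundedUnder_le
  constructor
  · exact le_liminf_of_le hcob_ge hev1
  · calc limsup u atTop ≤ limsup g atTop := limsup_le_limsup hev2 hcob_le hgtend.isBoundedUnder_le
      _ = γp - 1 - Real.log γp := hgtend.limsup_eq
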